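/- Let k ≥ 1 and n ≥ 2 be integers and let L be a k×k integer matrix all of whose row sums and column sums are zero. Let L̃ₙ be the (k+n−1)×(k+n−1) integer block matrix [[nIₖ + L, −J], [−J, (n+k)Iₙ₋₁ − J]], where each J denotes a block of all 1s. Then the cokernel ℤ^{k+n−1}/L̃ₙ(ℤ^{k+n−1}) is isomorphic as an abelian group to (ℤ/(n+k)ℤ)^{n−2} ⊕ (ℤᵏ/(nIₖ + L + Jₖ)(ℤᵏ)), where Jₖ is the k×k all-ones matrix. -/

import Mathlib

open Matrix

lemma vecMulVec_sq_zero {ι : Type*} [Fintype ι] [DecidableEq ι] (x y : ι → ℤ)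
    (h : y ⬝ᵥ x = 0) :
    Matrix.vecMulVec x y * Matrix.vecMulVec x y = 0 := by
  ext r c
  rw [Matrix.mul_apply]
  have : ∑ s, Matrix.vecMulVec x y r s * Matrix.vecMulVec x y s c
      = (x r * y c) * (y ⬝ᵥ x) := by
    rw [dotProduct, Finset.mul_sum]
    exact Finset.sum_congr rfl fun s _ => by simp [Matrix.vecMulVec_apply]; ring
  rw [this, h, mul_zero]
  simp

lemma elem_mul_inv {ι : Type*} [Fintype ι] [DecidableEq ι] (x y : ι → ℤ) (h : y ⬝ᵥ x = 0) :
    (1 + Matrix.vecMulVec x y) * (1 - Matrix.vecMulVec x y) = 1 := by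
  have h2 := vecMulVec_sq_zero x y h
  rw [mul_sub, add_mul, add_mul, mul_one, mul_one, one_mul, h2]
  abel

lemma elem_inv_mul {ι : Type*} [Fintype ι] [DecidableEq ι] (x y : ι → ℤ) (h : y ⬝ᵥ x = 0) :
    (1 - Matrix.vecMulVec x y) * (1 + Matrix.vecMulVec x y) = 1 := by
  have h2 := vecMulVec_sq_zero x y h
  rw [mul_add, sub_mul, sub_mul, mul_one, mul_one, one_mul, h2]
  abel

lemma add_vecMulVec_mul_apply {ι : Type*} [Fintype ι] [DecidableEq ι]
    (x y : ι → ℤ) (A : Matrix ι ι ℤ) (r c : ι) :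
    ((1 + Matrix.vecMulVec x y) * A) r c = A r c + x r * ∑ s, y s * A s c := by
  rw [add_mul, one_mul, Matrix.add_apply, Matrix.mul_apply, Finset.mul_sum]
  congr 1
  exact Finset.sum_congr rfl fun s _ => by rw [Matrix.vecMulVec_apply]; ring

lemma mul_sub_vecMulVec_apply {ι : Type*} [Fintype ι] [DecidableEq ι]
    (x y : ι → ℤ) (A : Matrix ι ι ℤ) (r c : ι) :
    (A * (1 - Matrix.vecMulVec x y)) r c = A r c - (∑ s, A r s * x s) * y c := by
  rw [mul_sub, mul_one, Matrix.sub_apply, Matrix.mul_apply, Finset.sum_mul]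
  congr 1
  exact Finset.sum_congr rfl fun s _ => by rw [Matrix.vecMulVec_apply]; ring

/-- Cokernel invariance under unimodular row/column operations. -/
noncomputable def cokEquivAux {ι : Type*} [Fintype ι] [DecidableEq ι]
    (A U V U' V' : Matrix ι ι ℤ)
    (hU : U * U' = 1) (hU' : U' * U = 1) (hV : V * V' = 1) :
    ((ι → ℤ) ⧸ LinearMap.range A.mulVecLin) ≃ₗ[ℤ]
      ((ι → ℤ) ⧸ LinearMap.range (U * A * V).mulVecLin) :=
  Submodule.Quotient.equiv _ _
    (LinearEquiv.ofLinear U.mulVecLin U'.mulVecLin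
      (by rw [← Matrix.mulVecLin_mul, hU, Matrix.mulVecLin_one])
      (by rw [← Matrix.mulVecLin_mul, hU', Matrix.mulVecLin_one]))
    (by
      have hVtop : LinearMap.range V.mulVecLin = ⊤ := by
        rw [LinearMap.range_eq_top]
        intro x
        refine ⟨V'.mulVecLin x, ?_⟩
        have : (V * V').mulVecLin x = (1 : Matrix ι ι ℤ).mulVecLin x := by rw [hV]
        simpa [Matrix.mulVecLin_mul] using this
      have h1 : (U * A * V).mulVecLin = (U * A).mulVecLin ∘ₗ V.mulVecLin :=
        Matrix.mulVecLin_mul _ _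
      have h2 : LinearMap.range (U * A * V).mulVecLin
          = LinearMap.range (U * A).mulVecLin := by
        rw [h1, LinearMap.range_comp_of_range_eq_top _ hVtop]
      have h3 : LinearMap.range (U * A).mulVecLin
          = Submodule.map U.mulVecLin (LinearMap.range A.mulVecLin) := by
        rw [Matrix.mulVecLin_mul, LinearMap.range_comp]
      rw [h2, h3]
      rfl)

set_option maxHeartbeats 1600000 in
theorem cone_critical_group_structure
    (k n : ℕ) (hk : 1 ≤ k) (hn : 2 ≤ n)
    (L : Matrix (Fin k) (Fin k) ℤ)
    (hrow : ∀ i, ∑ j, L i j = 0) (hcol : ∀ j, ∑ i, L i j = 0)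
    (Ln : Matrix (Fin k ⊕ Fin (n - 1)) (Fin k ⊕ Fin (n - 1)) ℤ)
    (hLn : Ln = Matrix.fromBlocks
      ((n : ℤ) • 1 + L) (-(Matrix.of fun _ _ => 1))
      (-(Matrix.of fun _ _ => 1)) (((n + k : ℕ) : ℤ) • 1 - Matrix.of fun _ _ => 1)) :
    Nonempty (
      ((Fin k ⊕ Fin (n - 1) → ℤ) ⧸ LinearMap.range Ln.mulVecLin)
        ≃+
      (Fin (n - 2) → ZMod (n + k)) ×
        ((Fin k → ℤ) ⧸
          LinearMap.range ((n : ℤ) • 1 + L + Matrix.of fun _ _ => 1).mulVecLin)) := by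
  classical
  set z : Fin (n-1) := ⟨0, by omega⟩ with hz
  set ℓ : Fin k ⊕ Fin (n-1) := Sum.inr z with hl
  set M : Matrix (Fin k) (Fin k) ℤ := (n : ℤ) • 1 + L + Matrix.of fun _ _ => 1 with hM
  set xe : (Fin k ⊕ Fin (n-1)) → ℤ := Pi.single ℓ 1 with hxe
  set ye : (Fin k ⊕ Fin (n-1)) → ℤ := (fun _ => 1) - Pi.single ℓ 1 with hye
  have hyx : ye ⬝ᵥ xe = 0 := by
    rw [dotProduct]
    apply Finset.sum_eq_zero
    intro s _
    by_cases hs : s = ℓ <;> simp [hxe, hye, hs, Pi.single_apply]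
  have hxy : xe ⬝ᵥ ye = 0 := by
    rw [dotProduct]
    apply Finset.sum_eq_zero
    intro s _
    by_cases hs : s = ℓ <;> simp [hxe, hye, hs, Pi.single_apply]
  set U1 : Matrix (Fin k ⊕ Fin (n-1)) (Fin k ⊕ Fin (n-1)) ℤ :=
    1 + Matrix.vecMulVec xe ye with hU1
  set W1 : Matrix (Fin k ⊕ Fin (n-1)) (Fin k ⊕ Fin (n-1)) ℤ :=
    1 - Matrix.vecMulVec xe ye with hW1
  set U3 : Matrix (Fin k ⊕ Fin (n-1)) (Fin k ⊕ Fin (n-1)) ℤ :=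
    1 + Matrix.vecMulVec ye xe with hU3
  set W3 : Matrix (Fin k ⊕ Fin (n-1)) (Fin k ⊕ Fin (n-1)) ℤ :=
    1 - Matrix.vecMulVec ye xe with hW3
  have hU1W1 : U1 * W1 = 1 := elem_mul_inv xe ye hyx
  have hW1U1 : W1 * U1 = 1 := elem_inv_mul xe ye hyx
  have hU3W3 : U3 * W3 = 1 := elem_mul_inv ye xe hxy
  have hW3U3 : W3 * U3 = 1 := elem_inv_mul ye xe hxy
  set D2 : Matrix (Fin (n-1)) (Fin (n-1)) ℤ :=
    Matrix.of (fun i j => if i = z then (if j = z then 1 else 0)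
      else if i = j then ((n + k : ℕ) : ℤ) else 0) with hD2
  set D : Matrix (Fin k ⊕ Fin (n-1)) (Fin k ⊕ Fin (n-1)) ℤ :=
    Matrix.fromBlocks M 0 0 D2 with hD
  -- column sums of Ln are all 1
  have hcolsum : ∀ c, ∑ s, Ln s c = 1 := by
    intro c
    have hcard : ((Fintype.card (Fin (n-1)) : ℕ) : ℤ) = ((n:ℤ) - 1) := by
      simp [Fintype.card_fin]
      push_cast [Nat.cast_sub (by omega : 1 ≤ n)]
      ring
    rcases c with b | j
    · rw [hLn]
      rw [Fintype.sum_sum_type]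
      simp only [Matrix.fromBlocks_apply₁₁, Matrix.fromBlocks_apply₂₁,
        Matrix.add_apply, Matrix.smul_apply, Matrix.one_apply, Matrix.neg_apply,
        Matrix.of_apply, smul_eq_mul]
      rw [Finset.sum_add_distrib, hcol b]
      simp [Finset.sum_ite_eq, Finset.card_univ]
      push_cast [Nat.cast_sub (by omega : 1 ≤ n)]
      ring
    · rw [hLn]
      rw [Fintype.sum_sum_type]
      simp only [Matrix.fromBlocks_apply₁₂, Matrix.fromBlocks_apply₂₂,
        Matrix.sub_apply, Matrix.smul_apply, Matrix.one_apply, Matrix.neg_apply,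
        Matrix.of_apply, smul_eq_mul]
      rw [Finset.sum_sub_distrib]
      simp [Finset.sum_ite_eq, Finset.card_univ]
      push_cast [Nat.cast_sub (by omega : 1 ≤ n)]
      ring
  -- entry values of Ln
  have hLn11 : ∀ a b, Ln (Sum.inl a) (Sum.inl b)
      = (n : ℤ) * (if a = b then 1 else 0) + L a b := by
    intro a b
    rw [hLn]
    simp only [Matrix.fromBlocks_apply₁₁, Matrix.add_apply, Matrix.smul_apply,
      Matrix.one_apply, smul_eq_mul]
  have hLn12 : ∀ a j, Ln (Sum.inl a) (Sum.inr j) = -1 := by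
    intro a j
    rw [hLn]
    simp only [Matrix.fromBlocks_apply₁₂, Matrix.neg_apply, Matrix.of_apply]
  have hLn21 : ∀ i b, Ln (Sum.inr i) (Sum.inl b) = -1 := by
    intro i b
    rw [hLn]
    simp only [Matrix.fromBlocks_apply₂₁, Matrix.neg_apply, Matrix.of_apply]
  have hLn22 : ∀ i j, Ln (Sum.inr i) (Sum.inr j)
      = ((n + k : ℕ) : ℤ) * (if i = j then 1 else 0) - 1 := by
    intro i j
    rw [hLn]
    simp only [Matrix.fromBlocks_apply₂₂, Matrix.sub_apply, Matrix.smul_apply,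
      Matrix.one_apply, Matrix.of_apply, smul_eq_mul]
  -- step 1:  U1 * Ln
  have hA1 : U1 * Ln = Matrix.of (fun r c => if r = ℓ then 1 else Ln r c) := by
    ext r c
    rw [hU1, add_vecMulVec_mul_apply]
    have hy : ∑ s, ye s * Ln s c = 1 - Ln ℓ c := by
      simp only [hye, Pi.sub_apply, sub_mul, one_mul, Finset.sum_sub_distrib,
        hcolsum c, Pi.single_apply, ite_mul, one_mul, zero_mul]
      simp [Finset.sum_ite_eq]
    rw [hy]
    by_cases hr : r = ℓ <;> simp [hxe, hr, Pi.single_apply] <;> ring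
  -- step 2:  (U1 * Ln) * W1
  have hA2 : U1 * Ln * W1 = Matrix.of (fun r c =>
      if r = ℓ then (if c = ℓ then 1 else 0)
      else (if c = ℓ then Ln r ℓ else Ln r c - Ln r ℓ)) := by
    ext r c
    rw [hA1, hW1, mul_sub_vecMulVec_apply]
    have hx : ∑ s, (Matrix.of (fun r c => if r = ℓ then 1 else Ln r c)) r s * xe s
        = (if r = ℓ then 1 else Ln r ℓ) := by
      simp only [hxe, Pi.single_apply, mul_ite, mul_one, mul_zero, Matrix.of_apply]
      simp [Finset.sum_ite_eq]
    rw [hx]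
    by_cases hr : r = ℓ <;> by_cases hc : c = ℓ <;>
      simp [hye, hr, hc, Pi.single_apply] <;> ring
  -- step 3:  U3 * (U1 * Ln * W1) = D
  have hmain : U3 * (U1 * Ln * W1) = D := by
    ext r c
    rw [hA2, hU3, add_vecMulVec_mul_apply]
    have hx : ∑ s, xe s * (Matrix.of (fun r c =>
        if r = ℓ then (if c = ℓ then 1 else 0)
        else (if c = ℓ then Ln r ℓ else Ln r c - Ln r ℓ))) s c
        = (if c = ℓ then 1 else 0) := by
      simp only [hxe, Pi.single_apply, ite_mul, one_mul, zero_mul, Matrix.of_apply]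
      simp [Finset.sum_ite_eq]
    rw [hx]
    have hl1 : ∀ a : Fin k, ((Sum.inl a : Fin k ⊕ Fin (n-1)) = ℓ) = False := by
      intro a; rw [hl]; simp
    have hye_inl : ∀ a : Fin k, ye (Sum.inl a) = 1 := by
      intro a; rw [hye]; simp [Pi.single_apply, hl]
    have hye_inr : ∀ i : Fin (n-1), ye (Sum.inr i) = if i = z then 0 else 1 := by
      intro i
      rw [hye]
      by_cases hi : i = z <;> simp [Pi.single_apply, hl, hi]
    have hl2 : ∀ i : Fin (n-1), ((Sum.inr i : Fin k ⊕ Fin (n-1)) = ℓ) = (i = z) := by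
      intro i; rw [hl]; simp
    rcases r with a | i <;> rcases c with b | j
    · -- top-left block
      simp only [Matrix.of_apply, hl1, if_false, hD, Matrix.fromBlocks_apply₁₁, hM,
        Matrix.add_apply, Matrix.smul_apply, Matrix.one_apply, smul_eq_mul,
        hLn11, hLn12, hl, hye_inl, reduceCtorEq]
      ring
    · -- top-right block
      simp only [Matrix.of_apply, hl1, if_false, hl2, hD, Matrix.fromBlocks_apply₁₂,
        Matrix.zero_apply, hl, hLn12, hye_inl]
      by_cases hj : j = z <;> simp [hj]
    · -- bottom-left block
      simp only [Matrix.of_apply, hl1, if_false, hl2, hD, Matrix.fromBlocks_apply₂₁,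
        Matrix.zero_apply, hl, hLn21, hLn22, hye_inr]
      by_cases hi : i = z <;> simp [hi]
    · -- bottom-right block
      simp only [Matrix.of_apply, hl2, hD, Matrix.fromBlocks_apply₂₂, hD2, hl,
        hLn22]
      by_cases hi : i = z
      · by_cases hj : j = z <;> simp [hi, hj, hye_inr, hLn22]
      · by_cases hj : j = z
        · simp [hi, hj, hye_inr, hLn22]
        · simp only [hi, hj, if_false, hye_inr, hLn22]
          by_cases hij : i = j <;> simp [hij, hi, hj] <;> ring
  -- cokernel equivalences from the unimodular operations
  have E1 := cokEquivAux Ln U1 W1 W1 U1 hU1W1 hW1U1 hW1U1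
  have E2 := cokEquivAux (U1 * Ln * W1) U3 1 W3 1 hU3W3 hW3U3 (one_mul 1)
  have E3 : ((Fin k ⊕ Fin (n-1) → ℤ) ⧸ LinearMap.range (U3 * (U1 * Ln * W1) * 1).mulVecLin)
      ≃ₗ[ℤ] ((Fin k ⊕ Fin (n-1) → ℤ) ⧸ LinearMap.range D.mulVecLin) :=
    Submodule.quotEquivOfEq _ _ (by rw [mul_one, hmain])
  -- the final surjection
  haveI : NeZero (n + k) := ⟨by omega⟩
  set φ : (Fin (n-1) → ℤ) →ₗ[ℤ] (Fin (n-2) → ZMod (n+k)) :=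
    { toFun := fun x j => ((x ⟨j.1+1, by omega⟩ : ℤ) : ZMod (n+k))
      map_add' := by intro x y; funext j; simp
      map_smul' := by intro c x; funext j; simp [zsmul_eq_mul] } with hφ
  set ψ : (Fin k ⊕ Fin (n-1) → ℤ) →ₗ[ℤ]
      ((Fin k → ℤ) ⧸ LinearMap.range M.mulVecLin) × (Fin (n-2) → ZMod (n+k)) :=
    { toFun := fun x =>
        ((LinearMap.range M.mulVecLin).mkQ (x ∘ Sum.inl), φ (x ∘ Sum.inr))
      map_add' := by
        intro x y
        have h1 : ((x + y) ∘ Sum.inl : Fin k → ℤ) = x ∘ Sum.inl + y ∘ Sum.inl := rfl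
        have h2 : ((x + y) ∘ Sum.inr : Fin (n-1) → ℤ) = x ∘ Sum.inr + y ∘ Sum.inr := rfl
        rw [h1, h2, map_add, map_add]
        rfl
      map_smul' := by
        intro c x
        have h1 : ((c • x) ∘ Sum.inl : Fin k → ℤ) = c • (x ∘ Sum.inl) := rfl
        have h2 : ((c • x) ∘ Sum.inr : Fin (n-1) → ℤ) = c • (x ∘ Sum.inr) := rfl
        rw [h1, h2, _root_.map_smul, _root_.map_smul]
        rfl } with hψ
  have hψapp : ∀ x, ψ x
      = ((LinearMap.range M.mulVecLin).mkQ (x ∘ Sum.inl), φ (x ∘ Sum.inr)) :=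
    fun x => rfl
  have hφapp : ∀ (x : Fin (n-1) → ℤ) (j : Fin (n-2)),
      φ x j = ((x ⟨j.1+1, by omega⟩ : ℤ) : ZMod (n+k)) := fun x j => rfl
  -- diagonal action of D2
  have hD2mul : ∀ (w : Fin (n-1) → ℤ) (i : Fin (n-1)),
      (D2 *ᵥ w) i = if i = z then w z else ((n + k : ℕ) : ℤ) * w i := by
    intro w i
    rw [Matrix.mulVec, dotProduct]
    by_cases hi : i = z
    · simp only [hD2, Matrix.of_apply, hi, if_pos, ite_mul, one_mul, zero_mul]
      simp [Finset.sum_ite_eq]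
    · simp only [hD2, Matrix.of_apply, hi, if_neg, if_false, ite_mul, zero_mul]
      simp [Finset.sum_ite_eq, hi]
  have hker : LinearMap.range D.mulVecLin = LinearMap.ker ψ := by
    ext x
    rw [LinearMap.mem_ker, hψapp, Prod.mk_eq_zero]
    constructor
    · rintro ⟨y, rfl⟩
      have hmv : D.mulVecLin y = D *ᵥ y := rfl
      rw [hmv, hD, Matrix.fromBlocks_mulVec]
      constructor
      · rw [show ((Sum.elim (M *ᵥ (y ∘ Sum.inl) + 0 *ᵥ (y ∘ Sum.inr))
            (0 *ᵥ (y ∘ Sum.inl) + D2 *ᵥ (y ∘ Sum.inr))) ∘ Sum.inl : Fin k → ℤ)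
            = M *ᵥ (y ∘ Sum.inl) from funext fun a => by simp]
        rw [Submodule.mkQ_apply, Submodule.Quotient.mk_eq_zero]
        exact ⟨y ∘ Sum.inl, rfl⟩
      · funext j
        rw [hφapp]
        have hne : (⟨j.1+1, by omega⟩ : Fin (n-1)) ≠ z := by
          rw [hz]; intro h; exact absurd (congrArg Fin.val h) (by simp)
        simp only [Function.comp_apply, Sum.elim_inr, Pi.add_apply,
          Matrix.zero_mulVec, Pi.zero_apply, zero_add]
        rw [hD2mul, if_neg hne]
        have hz0 : (((n + k : ℕ) : ℤ) : ZMod (n+k)) = 0 := by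
          rw [Int.cast_natCast, ZMod.natCast_self]
        rw [Int.cast_mul, hz0, zero_mul]
    · rintro ⟨hx1, hx2⟩
      rw [Submodule.mkQ_apply, Submodule.Quotient.mk_eq_zero] at hx1
      obtain ⟨u, hu⟩ := hx1
      have h2 : ∀ j : Fin (n-2), ((x (Sum.inr ⟨j.1+1, by omega⟩) : ℤ) : ZMod (n+k)) = 0 := by
        intro j
        have := congrFun hx2 j
        rw [hφapp] at this
        exact this
      have hdvd : ∀ i : Fin (n-1), i ≠ z → ((n + k : ℕ) : ℤ) ∣ x (Sum.inr i) := by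
        intro i hi
        have hival : (i : ℕ) ≠ 0 := by
          intro h; exact hi (by rw [hz]; exact Fin.ext h)
        have hj2 : (i : ℕ) - 1 < n - 2 := by
          have := i.2; omega
        have := h2 ⟨(i : ℕ) - 1, hj2⟩
        have heq : (⟨((i : ℕ) - 1) + 1, by omega⟩ : Fin (n-1)) = i := by
          apply Fin.ext; simp; omega
        rw [heq] at this
        exact (ZMod.intCast_zmod_eq_zero_iff_dvd _ _).1 this
      obtain ⟨w, hw⟩ : ∃ w : Fin (n-1) → ℤ, w = fun i =>
          if i = z then x (Sum.inr z) else (x (Sum.inr i)) / ((n + k : ℕ) : ℤ) :=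
        ⟨_, rfl⟩
      refine ⟨Sum.elim u w, ?_⟩
      have hmv : D.mulVecLin (Sum.elim u w) = D *ᵥ (Sum.elim u w) := rfl
      rw [hmv, hD, Matrix.fromBlocks_mulVec]
      funext r
      rcases r with a | i
      · have huw : (Sum.elim u w ∘ Sum.inl : Fin k → ℤ) = u := funext fun a => rfl
        simp only [Sum.elim_inl, Pi.add_apply, huw, Matrix.zero_mulVec, Pi.zero_apply,
          add_zero]
        exact congrFun hu a
      · have huw : (Sum.elim u w ∘ Sum.inr : Fin (n-1) → ℤ) = w := funext fun i => rfl
        simp only [Sum.elim_inr, Pi.add_apply, huw, Matrix.zero_mulVec, Pi.zero_apply,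
          zero_add]
        rw [hD2mul]
        by_cases hi : i = z
        · rw [if_pos hi]; simp only [hw]; simp [hi]
        · rw [if_neg hi]
          simp only [hw]
          simp only [hi, if_neg, if_false]
          exact Int.mul_ediv_cancel' (hdvd i hi)
  have hsurj : Function.Surjective ψ := by
    rintro ⟨q, g⟩
    obtain ⟨u, rfl⟩ := Submodule.mkQ_surjective _ q
    obtain ⟨w, hw⟩ : ∃ w : Fin (n-1) → ℤ, w = fun (i : Fin (n-1)) =>
        if h : (i : ℕ) = 0 then 0
        else ((g ⟨(i : ℕ) - 1, by have := i.2; omega⟩).val : ℤ) :=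
      ⟨_, rfl⟩
    refine ⟨Sum.elim u w, ?_⟩
    rw [hψapp]
    have huw1 : (Sum.elim u w ∘ Sum.inl : Fin k → ℤ) = u := funext fun a => rfl
    rw [huw1]
    have huw2 : (Sum.elim u w ∘ Sum.inr : Fin (n-1) → ℤ) = w := funext fun i => rfl
    rw [huw2]
    refine Prod.ext rfl ?_
    show φ w = g
    funext j
    rw [hφapp]
    have hval : w ⟨j.1+1, by omega⟩ = ((g j).val : ℤ) := by
      simp only [hw]
      have h0 : ((⟨j.1+1, by omega⟩ : Fin (n-1)) : ℕ) ≠ 0 := by simp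
      rw [dif_neg h0]
      simp
    rw [hval]
    push_cast
    simp [ZMod.natCast_val, ZMod.cast_id]
  have E4 : ((Fin k ⊕ Fin (n-1) → ℤ) ⧸ LinearMap.range D.mulVecLin)
      ≃ₗ[ℤ] ((Fin k → ℤ) ⧸ LinearMap.range M.mulVecLin) × (Fin (n-2) → ZMod (n+k)) :=
    (Submodule.quotEquivOfEq _ _ hker).trans (ψ.quotKerEquivOfSurjective hsurj)
  exact ⟨(E1.trans (E2.trans (E3.trans (E4.trans (LinearEquiv.prodComm ℤ _ _))))).toAddEquiv⟩
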